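/- arXiv:1909.08295 — 4 statements merged into one kernel-verified Lean document; each statement's English description precedes it below -/
import Mathlib

section
/- Let σ > 0 and α ∈ (0,1) with α < σ + 1/2. Then the Gagliardo (Slobodeckij) double integral of the power function x ↦ x^σ on (0,1) is finite: ∫₀¹ ∫₀¹ (x^σ − y^σ)² / |x−y|^{1+2α} dx dy < ∞. -/
open MeasureTheory Set
open scoped ENNReal NNReal

private lemma real_rpow_add_le {a b p : ℝ} (ha : 0 ≤ a) (hb : 0 ≤ b)
    (hp0 : 0 ≤ p) (hp1 : p ≤ 1) : (a + b) ^ p ≤ a ^ p + b ^ p := by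
  have h := NNReal.rpow_add_le_add_rpow (⟨a, ha⟩ : NNReal) ⟨b, hb⟩ hp0 hp1
  have h2 := NNReal.coe_le_coe.2 h
  push_cast at h2
  exact h2

private lemma bern {u v r : ℝ} (hu : 0 ≤ u) (hv : 0 < v) (hr : 1 ≤ r) :
    v ^ r - u ^ r ≤ r * (v ^ (r - 1) * (v - u)) := by
  have ht : (-1 : ℝ) ≤ u / v - 1 := by
    have : 0 ≤ u / v := div_nonneg hu hv.le
    linarith
  have hb := one_add_mul_self_le_rpow_one_add ht hr
  rw [add_sub_cancel, Real.div_rpow hu hv.le] at hb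
  have hvr : 0 < v ^ r := Real.rpow_pos_of_pos hv r
  have hb2 : (1 + r * (u / v - 1)) * v ^ r ≤ u ^ r := by
    have := mul_le_mul_of_nonneg_right hb hvr.le
    rwa [div_mul_cancel₀ _ hvr.ne'] at this
  have hv1 : v ^ (r - 1) * v = v ^ r := by
    nth_rewrite 2 [← Real.rpow_one v]
    rw [← Real.rpow_add hv]; ring_nf
  have h3 : u / v * v ^ r = u * v ^ (r - 1) := by
    rw [← hv1]; field_simp
  rw [show (1 + r * (u / v - 1)) * v ^ r = v ^ r + r * (u / v * v ^ r) - r * v ^ r from by ring,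
    h3] at hb2
  have h5 : r * (v ^ (r - 1) * (v - u)) = r * v ^ r - r * (u * v ^ (r - 1)) := by
    rw [← hv1]; ring
  rw [h5]; linarith

private lemma pow_diff_bound {σ β : ℝ} (hσ : 0 < σ) (hβ0 : 0 < β) (hβ1 : β ≤ 1)
    {x y : ℝ} (hy : 0 ≤ y) (hxy : y ≤ x) :
    x ^ σ - y ^ σ ≤ max 1 (σ / β) * (x ^ (σ - β) * (x - y) ^ β) := by
  have hx : 0 ≤ x := hy.trans hxy
  have hC1 : (1 : ℝ) ≤ max 1 (σ / β) := le_max_left _ _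
  rcases eq_or_lt_of_le hx with hx0 | hx0
  · have hy0 : y = 0 := le_antisymm (hxy.trans hx0.symm.le) hy
    simp only [← hx0, hy0, sub_zero, sub_self]
    positivity
  -- now 0 < x
  have hstep2 : x ^ β - y ^ β ≤ (x - y) ^ β := by
    have h := real_rpow_add_le (sub_nonneg.2 hxy) hy hβ0.le hβ1
    rw [sub_add_cancel] at h
    linarith
  have hfacnn : 0 ≤ x ^ (σ - β) * (x ^ β - y ^ β) :=
    mul_nonneg (Real.rpow_nonneg hx _)
      (sub_nonneg.2 (Real.rpow_le_rpow hy hxy hβ0.le))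
  have hmul : x ^ (σ - β) * x ^ β = x ^ σ := by
    rw [← Real.rpow_add hx0]; ring_nf
  have hstepA : x ^ σ - y ^ σ ≤ max 1 (σ / β) * (x ^ (σ - β) * (x ^ β - y ^ β)) := by
    rcases le_total σ β with hσβ | hβσ
    · -- σ ≤ β : constant 1 suffices
      have hyx : x ^ (σ - β) * y ^ β ≤ y ^ σ := by
        rcases eq_or_lt_of_le hy with hy0 | hy0
        · simp [← hy0, Real.zero_rpow hβ0.ne', Real.zero_rpow hσ.ne']
        · have h1 : x ^ (σ - β) ≤ y ^ (σ - β) :=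
            Real.rpow_le_rpow_of_nonpos hy0 hxy (by linarith)
          calc x ^ (σ - β) * y ^ β ≤ y ^ (σ - β) * y ^ β :=
                mul_le_mul_of_nonneg_right h1 (Real.rpow_nonneg hy _)
            _ = y ^ σ := by rw [← Real.rpow_add hy0]; ring_nf
      calc x ^ σ - y ^ σ ≤ x ^ σ - x ^ (σ - β) * y ^ β := by linarith
        _ = x ^ (σ - β) * (x ^ β - y ^ β) := by rw [mul_sub, hmul]
        _ ≤ max 1 (σ / β) * (x ^ (σ - β) * (x ^ β - y ^ β)) :=
            le_mul_of_one_le_left hfacnn hC1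
    · -- β ≤ σ : Bernoulli
      have hr : 1 ≤ σ / β := (one_le_div hβ0).2 hβσ
      have hb := bern (Real.rpow_nonneg hy β) (Real.rpow_pos_of_pos hx0 β) hr
      have e1 : (x ^ β) ^ (σ / β) = x ^ σ := by
        rw [← Real.rpow_mul hx]
        congr 1; field_simp
      have e2 : (y ^ β) ^ (σ / β) = y ^ σ := by
        rw [← Real.rpow_mul hy]
        congr 1; field_simp
      have e3 : (x ^ β) ^ (σ / β - 1) = x ^ (σ - β) := by
        rw [← Real.rpow_mul hx]
        congr 1; field_simp
      rw [e1, e2, e3] at hb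
      calc x ^ σ - y ^ σ ≤ σ / β * (x ^ (σ - β) * (x ^ β - y ^ β)) := hb
        _ ≤ max 1 (σ / β) * (x ^ (σ - β) * (x ^ β - y ^ β)) :=
            mul_le_mul_of_nonneg_right (le_max_right _ _) hfacnn
  calc x ^ σ - y ^ σ ≤ max 1 (σ / β) * (x ^ (σ - β) * (x ^ β - y ^ β)) := hstepA
    _ ≤ max 1 (σ / β) * (x ^ (σ - β) * (x - y) ^ β) := by
        apply mul_le_mul_of_nonneg_left _ (by linarith)
        exact mul_le_mul_of_nonneg_left hstep2 (Real.rpow_nonneg hx _)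

private lemma side_bound {σ α β : ℝ} (hσ : 0 < σ) (hβ0 : 0 < β) (hβ1 : β ≤ 1)
    {x y : ℝ} (hy : 0 ≤ y) (hxy : y < x) :
    (x ^ σ - y ^ σ) ^ 2 / (x - y) ^ (1 + 2 * α) ≤
      (max 1 (σ / β)) ^ 2 * (x ^ (2 * σ - 2 * β) * (x - y) ^ (2 * β - (1 + 2 * α))) := by
  have hx0 : 0 < x := lt_of_le_of_lt hy hxy
  have hd0 : 0 < x - y := sub_pos.2 hxy
  have hnum0 : 0 ≤ x ^ σ - y ^ σ := sub_nonneg.2 (Real.rpow_le_rpow hy hxy.le hσ.le)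
  have hb := pow_diff_bound hσ hβ0 hβ1 hy hxy.le
  have hsq : (x ^ σ - y ^ σ) ^ 2 ≤
      (max 1 (σ / β)) ^ 2 * (x ^ (2 * σ - 2 * β) * (x - y) ^ (2 * β)) := by
    have h2 : (x ^ σ - y ^ σ) ^ 2 ≤ (max 1 (σ / β) * (x ^ (σ - β) * (x - y) ^ β)) ^ 2 :=
      pow_le_pow_left₀ hnum0 hb 2
    calc (x ^ σ - y ^ σ) ^ 2 ≤ (max 1 (σ / β) * (x ^ (σ - β) * (x - y) ^ β)) ^ 2 := h2
      _ = (max 1 (σ / β)) ^ 2 * ((x ^ (σ - β) * x ^ (σ - β)) * ((x - y) ^ β * (x - y) ^ β)) := by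
          ring
      _ = (max 1 (σ / β)) ^ 2 * (x ^ (2 * σ - 2 * β) * (x - y) ^ (2 * β)) := by
          rw [← Real.rpow_add hx0, ← Real.rpow_add hd0]
          ring_nf
  have hden : 0 < (x - y) ^ (1 + 2 * α) := Real.rpow_pos_of_pos hd0 _
  rw [div_le_iff₀ hden]
  calc (x ^ σ - y ^ σ) ^ 2 ≤
        (max 1 (σ / β)) ^ 2 * (x ^ (2 * σ - 2 * β) * (x - y) ^ (2 * β)) := hsq
    _ = (max 1 (σ / β)) ^ 2 * (x ^ (2 * σ - 2 * β) * (x - y) ^ (2 * β - (1 + 2 * α))) *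
          (x - y) ^ (1 + 2 * α) := by
        rw [show (2 * β) = (2 * β - (1 + 2 * α)) + (1 + 2 * α) from by ring,
          Real.rpow_add hd0]
        ring_nf

/-- The power function `x ↦ x^σ` has finite Gagliardo (Slobodeckij) seminorm of order
`α` on `(0,1)` whenever `0 < α < 1` and `α < σ + 1/2`. -/
theorem power_function_gagliardo_finite (σ α : ℝ) (hσ : 0 < σ)
    (hα0 : 0 < α) (hα1 : α < 1) (hασ : α < σ + 1 / 2) :
    ∫⁻ x in Set.Ioo (0:ℝ) 1, ∫⁻ y in Set.Ioo (0:ℝ) 1,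
        ENNReal.ofReal ((x ^ σ - y ^ σ) ^ 2 / |x - y| ^ (1 + 2 * α)) < ⊤ := by
  set β : ℝ := (α + min 1 (σ + 1 / 2)) / 2 with hβdef
  have hαm : α < min 1 (σ + 1 / 2) := lt_min hα1 hασ
  have hαβ : α < β := by rw [hβdef]; linarith
  have hβ0 : 0 < β := hα0.trans hαβ
  have hβ1 : β ≤ 1 := by
    have : β < min 1 (σ + 1 / 2) := by rw [hβdef]; linarith
    exact le_of_lt (this.trans_le (min_le_left _ _))
  have hβσ : β < σ + 1 / 2 := by
    have : β < min 1 (σ + 1 / 2) := by rw [hβdef]; linarith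
    exact this.trans_le (min_le_right _ _)
  set p : ℝ := 2 * σ - 2 * β with hpdef
  set q : ℝ := 2 * β - (1 + 2 * α) with hqdef
  have hp : (-1 : ℝ) < p := by rw [hpdef]; linarith
  have hq : (-1 : ℝ) < q := by rw [hqdef]; linarith
  set C : ℝ := (max 1 (σ / β)) ^ 2 with hCdef
  have hC0 : 0 ≤ C := by positivity
  set K : ℝ≥0∞ := ∫⁻ t in Set.Ioo (-1 : ℝ) 1, ENNReal.ofReal (t ^ q) with hKdef
  have hKne : K ≠ ⊤ := by
    have hint : IntegrableOn (fun t : ℝ => t ^ q) (Set.Ioo (-1 : ℝ) 1) := by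
      have h := intervalIntegral.intervalIntegrable_rpow' (a := (-1 : ℝ)) (b := 1) hq
      rwa [intervalIntegrable_iff_integrableOn_Ioo_of_le (by norm_num)] at h
    refine ne_of_lt (lt_of_le_of_lt (lintegral_mono fun t => ?_) hint.hasFiniteIntegral)
    exact Real.ofReal_le_enorm _
  have hPne : (∫⁻ x in Set.Ioo (0:ℝ) 1, ENNReal.ofReal (x ^ p)) ≠ ⊤ := by
    have hint : IntegrableOn (fun t : ℝ => t ^ p) (Set.Ioo (0 : ℝ) 1) :=
      (intervalIntegral.integrableOn_Ioo_rpow_iff one_pos).2 hp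
    refine ne_of_lt (lt_of_le_of_lt (lintegral_mono fun t => ?_) hint.hasFiniteIntegral)
    exact Real.ofReal_le_enorm _
  -- measurable building blocks
  have hmeas1 : ∀ x : ℝ, Measurable fun y : ℝ =>
      ENNReal.ofReal ((x - y) ^ q) + ENNReal.ofReal ((y - x) ^ q) := by
    intro x
    fun_prop
  -- the pointwise bound
  have hpoint : ∀ x ∈ Set.Ioo (0:ℝ) 1, ∀ y ∈ Set.Ioo (0:ℝ) 1,
      ENNReal.ofReal ((x ^ σ - y ^ σ) ^ 2 / |x - y| ^ (1 + 2 * α)) ≤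
        (ENNReal.ofReal C * (1 + ENNReal.ofReal (x ^ p))) *
          (ENNReal.ofReal ((x - y) ^ q) + ENNReal.ofReal ((y - x) ^ q)) := by
    intro x hx y hy
    rcases lt_trichotomy y x with hlt | heq | hgt
    · -- y < x
      have hb := side_bound (α := α) hσ hβ0 hβ1 hy.1.le hlt
      rw [abs_of_pos (sub_pos.2 hlt)]
      calc ENNReal.ofReal ((x ^ σ - y ^ σ) ^ 2 / (x - y) ^ (1 + 2 * α))
          ≤ ENNReal.ofReal (C * (x ^ p * (x - y) ^ q)) := ENNReal.ofReal_le_ofReal hb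
        _ = ENNReal.ofReal C * ENNReal.ofReal (x ^ p) * ENNReal.ofReal ((x - y) ^ q) := by
            rw [ENNReal.ofReal_mul hC0, ENNReal.ofReal_mul (Real.rpow_nonneg hx.1.le _),
              mul_assoc]
        _ ≤ (ENNReal.ofReal C * (1 + ENNReal.ofReal (x ^ p))) *
              (ENNReal.ofReal ((x - y) ^ q) + ENNReal.ofReal ((y - x) ^ q)) := by
            exact mul_le_mul' (mul_le_mul' le_rfl le_add_self) (le_add_right le_rfl)
    · simp [heq, Real.zero_rpow (by positivity : (1 + 2 * α) ≠ 0)]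
    · -- x < y
      have hb := side_bound (α := α) hσ hβ0 hβ1 hx.1.le hgt
      have habs : |x - y| = y - x := by rw [abs_sub_comm, abs_of_pos (sub_pos.2 hgt)]
      have hsq : (x ^ σ - y ^ σ) ^ 2 = (y ^ σ - x ^ σ) ^ 2 := by ring
      rw [habs, hsq]
      have hyple : ENNReal.ofReal (y ^ p) ≤ 1 + ENNReal.ofReal (x ^ p) := by
        rcases le_or_gt 0 p with hp0 | hp0
        · calc ENNReal.ofReal (y ^ p) ≤ 1 :=
                ENNReal.ofReal_le_one.2 (Real.rpow_le_one hy.1.le hy.2.le hp0)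
            _ ≤ 1 + ENNReal.ofReal (x ^ p) := le_add_right le_rfl
        · calc ENNReal.ofReal (y ^ p) ≤ ENNReal.ofReal (x ^ p) :=
                ENNReal.ofReal_le_ofReal
                  (Real.rpow_le_rpow_of_nonpos hx.1 hgt.le hp0.le)
            _ ≤ 1 + ENNReal.ofReal (x ^ p) := le_add_self
      calc ENNReal.ofReal ((y ^ σ - x ^ σ) ^ 2 / (y - x) ^ (1 + 2 * α))
          ≤ ENNReal.ofReal (C * (y ^ p * (y - x) ^ q)) := ENNReal.ofReal_le_ofReal hb
        _ = ENNReal.ofReal C * ENNReal.ofReal (y ^ p) * ENNReal.ofReal ((y - x) ^ q) := by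
            rw [ENNReal.ofReal_mul hC0, ENNReal.ofReal_mul (Real.rpow_nonneg hy.1.le _),
              mul_assoc]
        _ ≤ (ENNReal.ofReal C * (1 + ENNReal.ofReal (x ^ p))) *
              (ENNReal.ofReal ((x - y) ^ q) + ENNReal.ofReal ((y - x) ^ q)) := by
            exact mul_le_mul' (mul_le_mul' le_rfl hyple) (le_add_left le_rfl)
  -- inner integral bounds via translation invariance
  have hinner1 : ∀ x ∈ Set.Ioo (0:ℝ) 1,
      (∫⁻ y in Set.Ioo (0:ℝ) 1, ENNReal.ofReal ((x - y) ^ q)) ≤ K := by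
    intro x hx
    have hmp : MeasurePreserving (fun t : ℝ => x - t) volume volume :=
      Measure.measurePreserving_sub_left volume x
    have hemb : MeasurableEmbedding (fun t : ℝ => x - t) :=
      (MeasurableEquiv.subLeft x).measurableEmbedding
    have hpre : (fun t : ℝ => x - t) ⁻¹' (Set.Ioo (x - 1) x) = Set.Ioo (0:ℝ) 1 := by
      ext t
      simp only [Set.mem_preimage, Set.mem_Ioo]
      constructor <;> rintro ⟨h1, h2⟩ <;> constructor <;> linarith
    calc (∫⁻ y in Set.Ioo (0:ℝ) 1, ENNReal.ofReal ((x - y) ^ q))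
        = ∫⁻ t in Set.Ioo (x - 1) x, ENNReal.ofReal (t ^ q) := by
          rw [← hpre]
          exact hmp.setLIntegral_comp_preimage_emb hemb (fun t => ENNReal.ofReal (t ^ q)) _
      _ ≤ K := lintegral_mono_set (fun t ht => ⟨by linarith [ht.1, ht.2, hx.1, hx.2], by linarith [ht.1, ht.2, hx.1, hx.2]⟩)
  have hinner2 : ∀ x ∈ Set.Ioo (0:ℝ) 1,
      (∫⁻ y in Set.Ioo (0:ℝ) 1, ENNReal.ofReal ((y - x) ^ q)) ≤ K := by
    intro x hx
    have hmp : MeasurePreserving (fun t : ℝ => t - x) volume volume :=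
      measurePreserving_sub_right volume x
    have hemb : MeasurableEmbedding (fun t : ℝ => t - x) :=
      (MeasurableEquiv.subRight x).measurableEmbedding
    have hpre : (fun t : ℝ => t - x) ⁻¹' (Set.Ioo (-x) (1 - x)) = Set.Ioo (0:ℝ) 1 := by
      ext t
      simp only [Set.mem_preimage, Set.mem_Ioo]
      constructor <;> rintro ⟨h1, h2⟩ <;> constructor <;> linarith
    calc (∫⁻ y in Set.Ioo (0:ℝ) 1, ENNReal.ofReal ((y - x) ^ q))
        = ∫⁻ t in Set.Ioo (-x) (1 - x), ENNReal.ofReal (t ^ q) := by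
          rw [← hpre]
          exact hmp.setLIntegral_comp_preimage_emb hemb (fun t => ENNReal.ofReal (t ^ q)) _
      _ ≤ K := lintegral_mono_set (fun t ht => ⟨by linarith [ht.1, ht.2, hx.1, hx.2], by linarith [ht.1, ht.2, hx.1, hx.2]⟩)
  -- put the inner integral together
  have hApne : ∀ x : ℝ, (ENNReal.ofReal C * (1 + ENNReal.ofReal (x ^ p))) ≠ ⊤ :=
    fun x => ENNReal.mul_ne_top ENNReal.ofReal_ne_top
      (by simp [ENNReal.add_ne_top])
  have hInner : ∀ x ∈ Set.Ioo (0:ℝ) 1,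
      (∫⁻ y in Set.Ioo (0:ℝ) 1,
        ENNReal.ofReal ((x ^ σ - y ^ σ) ^ 2 / |x - y| ^ (1 + 2 * α))) ≤
      (ENNReal.ofReal C * (1 + ENNReal.ofReal (x ^ p))) * (K + K) := by
    intro x hx
    calc (∫⁻ y in Set.Ioo (0:ℝ) 1,
            ENNReal.ofReal ((x ^ σ - y ^ σ) ^ 2 / |x - y| ^ (1 + 2 * α)))
        ≤ ∫⁻ y in Set.Ioo (0:ℝ) 1,
            (ENNReal.ofReal C * (1 + ENNReal.ofReal (x ^ p))) *
              (ENNReal.ofReal ((x - y) ^ q) + ENNReal.ofReal ((y - x) ^ q)) :=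
          setLIntegral_mono (by fun_prop) (hpoint x hx)
      _ = (ENNReal.ofReal C * (1 + ENNReal.ofReal (x ^ p))) *
            ∫⁻ y in Set.Ioo (0:ℝ) 1,
              (ENNReal.ofReal ((x - y) ^ q) + ENNReal.ofReal ((y - x) ^ q)) :=
          lintegral_const_mul' _ _ (hApne x)
      _ ≤ (ENNReal.ofReal C * (1 + ENNReal.ofReal (x ^ p))) * (K + K) := by
          apply mul_le_mul_right
          rw [lintegral_add_left (by fun_prop)]
          exact add_le_add (hinner1 x hx) (hinner2 x hx)
  -- outer integral
  have houter : (∫⁻ x in Set.Ioo (0:ℝ) 1,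
      (ENNReal.ofReal C * (1 + ENNReal.ofReal (x ^ p))) * (K + K)) < ⊤ := by
    have hrw : ∀ x : ℝ, (ENNReal.ofReal C * (1 + ENNReal.ofReal (x ^ p))) * (K + K) =
        (ENNReal.ofReal C * (K + K)) * (1 + ENNReal.ofReal (x ^ p)) := by
      intro x; ring
    simp only [hrw]
    rw [lintegral_const_mul' _ _
      (ENNReal.mul_ne_top ENNReal.ofReal_ne_top (ENNReal.add_ne_top.2 ⟨hKne, hKne⟩))]
    rw [lintegral_add_left measurable_const]
    refine ENNReal.mul_lt_top ?_ ?_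
    · exact (ENNReal.mul_ne_top ENNReal.ofReal_ne_top
        (ENNReal.add_ne_top.2 ⟨hKne, hKne⟩)).lt_top
    · rw [setLIntegral_const]
      refine (ENNReal.add_ne_top.2 ⟨?_, hPne⟩).lt_top
      simp [Real.volume_Ioo]
  exact lt_of_le_of_lt
    (setLIntegral_mono (by fun_prop) hInner) houter
end

section
/- Let 1 < s < 2 and let φ : [0,1] → ℝ be continuously differentiable with φ(0) = φ(1) = 0. Then ∫₀¹ [ (1/Γ(1−s/2)) ∫₀ˣ (x−t)^{−s/2} φ′(t) dt ] (1−x)^{s/2−1} dx = 0; that is, the left Riemann–Liouville derivative of order s/2 of φ is L²-orthogonal to the function (1−x)^{s/2−1} on (0,1). -/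
open MeasureTheory Set intervalIntegral

lemma rl_subst (p q : ℝ) (hpq : p + q = -1) (t : ℝ) (ht : 0 ≤ t) (ht1 : t < 1) :
    ∫ x in t..1, (x - t) ^ p * (1 - x) ^ q = ∫ u in (0:ℝ)..1, u ^ p * (1 - u) ^ q := by
  have h1t : (0:ℝ) < 1 - t := by linarith
  have key := intervalIntegral.smul_integral_comp_mul_add (a := 0) (b := 1)
      (fun x => (x - t) ^ p * (1 - x) ^ q) (1 - t) t
  simp only [mul_zero, zero_add, mul_one, sub_add_cancel] at key
  rw [← key]
  have congr1 : EqOn (fun u : ℝ => ((1 - t) * u + t - t) ^ p * (1 - ((1 - t) * u + t)) ^ q)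
      (fun u : ℝ => (1 - t)⁻¹ * (u ^ p * (1 - u) ^ q)) (Set.uIcc (0:ℝ) 1) := by
    intro u hu
    rw [Set.uIcc_of_le (by norm_num : (0:ℝ) ≤ 1)] at hu
    have hu0 : 0 ≤ u := hu.1
    have hu1 : 0 ≤ 1 - u := by linarith [hu.2]
    have e1 : (1 - t) * u + t - t = (1 - t) * u := by ring
    have e2 : 1 - ((1 - t) * u + t) = (1 - t) * (1 - u) := by ring
    simp only [e1, e2]
    rw [Real.mul_rpow h1t.le hu0, Real.mul_rpow h1t.le hu1]
    have h3 : (1 - t) ^ p * (1 - t) ^ q = (1 - t)⁻¹ := by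
      rw [← Real.rpow_add h1t, hpq, Real.rpow_neg_one]
    calc (1 - t) ^ p * u ^ p * ((1 - t) ^ q * (1 - u) ^ q)
        = ((1 - t) ^ p * (1 - t) ^ q) * (u ^ p * (1 - u) ^ q) := by ring
      _ = (1 - t)⁻¹ * (u ^ p * (1 - u) ^ q) := by rw [h3]
  rw [intervalIntegral.integral_congr congr1, intervalIntegral.integral_const_mul,
    smul_eq_mul, ← mul_assoc, mul_inv_cancel₀ h1t.ne', one_mul]

/-- For `1 < s < 2` and `φ` continuously differentiable on `[0,1]` with
`φ 0 = φ 1 = 0`, the left Riemann–Liouville derivative of order `s/2` of `φ`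
is `L²`-orthogonal to `(1-x)^{s/2-1}` on `(0,1)`. -/
theorem rl_deriv_orthogonal_singular (s : ℝ) (hs1 : 1 < s) (hs2 : s < 2)
    (φ φ' : ℝ → ℝ)
    (hφ : ∀ x ∈ Set.Icc (0:ℝ) 1, HasDerivAt φ (φ' x) x)
    (hφ' : ContinuousOn φ' (Set.Icc 0 1))
    (h0 : φ 0 = 0) (h1 : φ 1 = 0) :
    ∫ x in (0:ℝ)..1,
        ((1 / Real.Gamma (1 - s / 2)) * ∫ t in (0:ℝ)..x, (x - t) ^ (-(s / 2)) * φ' t) *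
          (1 - x) ^ (s / 2 - 1) = 0 := by
  set p : ℝ := -(s / 2) with hpdef
  set q : ℝ := s / 2 - 1 with hqdef
  have hp1 : (-1:ℝ) < p := by rw [hpdef]; linarith
  have hq1 : (-1:ℝ) < q := by rw [hqdef]; linarith
  have hpq : p + q = -1 := by rw [hpdef, hqdef]; ring
  have hp1pos : (0:ℝ) < p + 1 := by linarith
  -- bound on φ'
  obtain ⟨M, hM⟩ := isCompact_Icc.exists_bound_of_continuousOn hφ'
  have hM0 : 0 ≤ M := le_trans (norm_nonneg _) (hM 0 (by norm_num))
  -- the product-space function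
  set S : Set (ℝ × ℝ) := {z | 0 < z.2 ∧ z.2 < z.1 ∧ z.1 < 1} with hSdef
  set g : ℝ × ℝ → ℝ := fun z => ((z.1 - z.2) ^ p * φ' z.2) * (1 - z.1) ^ q with hgdef
  set F : ℝ × ℝ → ℝ := S.indicator g with hFdef
  have hSopen : IsOpen S :=
    (isOpen_lt continuous_const continuous_snd).inter
      ((isOpen_lt continuous_snd continuous_fst).inter
        (isOpen_lt continuous_fst continuous_const))
  have hgcont : ContinuousOn g S := by
    have c1 : ContinuousOn (fun z : ℝ × ℝ => (z.1 - z.2) ^ p) S :=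
      (continuousOn_fst.sub continuousOn_snd).rpow_const
        (fun z hz => Or.inl (sub_pos.mpr hz.2.1).ne')
    have c2 : ContinuousOn (fun z : ℝ × ℝ => φ' z.2) S :=
      hφ'.comp continuous_snd.continuousOn
        (fun z hz => ⟨hz.1.le, le_trans hz.2.1.le hz.2.2.le⟩)
    have c3 : ContinuousOn (fun z : ℝ × ℝ => (1 - z.1) ^ q) S :=
      (continuousOn_const.sub continuousOn_fst).rpow_const
        (fun z hz => Or.inl (sub_pos.mpr hz.2.2).ne')
    exact (c1.mul c2).mul c3
  have hFmeas : AEStronglyMeasurable F (volume.prod volume) :=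
    (aestronglyMeasurable_indicator_iff hSopen.measurableSet).mpr
      (hgcont.aestronglyMeasurable hSopen.measurableSet)
  -- sections
  have hsec : ∀ x : ℝ, x < 1 → (fun t => F (x, t)) =
      (Set.Ioo (0:ℝ) x).indicator (fun t => ((x - t) ^ p * φ' t) * (1 - x) ^ q) := by
    intro x hx1; funext t
    by_cases h : t ∈ Set.Ioo (0:ℝ) x
    · rw [Set.indicator_of_mem h]
      exact Set.indicator_of_mem (show (x, t) ∈ S from ⟨h.1, h.2, hx1⟩) g
    · rw [Set.indicator_of_notMem h]
      refine Set.indicator_of_notMem (fun hmem => h ⟨hmem.1, hmem.2.1⟩) g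
  have hzero : ∀ x : ℝ, ¬(0 < x ∧ x < 1) → (fun t => F (x, t)) = fun _ => (0:ℝ) := by
    intro x hx; funext t
    refine Set.indicator_of_notMem (fun hmem => hx ⟨lt_trans hmem.1 hmem.2.1, hmem.2.2⟩) g
  have htzero : ∀ t : ℝ, ¬(0 < t ∧ t < 1) → (fun x => F (x, t)) = fun _ => (0:ℝ) := by
    intro t ht; funext x
    refine Set.indicator_of_notMem (fun hmem => ht ⟨hmem.1, lt_trans hmem.2.1 hmem.2.2⟩) g
  have hsec2 : ∀ t : ℝ, 0 < t → (fun x => F (x, t)) =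
      (Set.Ioo t (1:ℝ)).indicator (fun x => ((x - t) ^ p * φ' t) * (1 - x) ^ q) := by
    intro t ht0; funext x
    by_cases h : x ∈ Set.Ioo t (1:ℝ)
    · rw [Set.indicator_of_mem h]
      exact Set.indicator_of_mem (show (x, t) ∈ S from ⟨ht0, h.1, h.2⟩) g
    · rw [Set.indicator_of_notMem h]
      refine Set.indicator_of_notMem (fun hmem => h ⟨hmem.2.1, hmem.2.2⟩) g
  -- kernel integrability and value
  have hker : ∀ x : ℝ, IntervalIntegrable (fun t => (x - t) ^ p) volume 0 x := by
    intro x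
    have i1 : IntervalIntegrable (fun u : ℝ => u ^ p) volume 0 x :=
      intervalIntegral.intervalIntegrable_rpow' hp1
    simpa using (i1.comp_sub_left x).symm
  have hkerval : ∀ x : ℝ, ∫ t in (0:ℝ)..x, (x - t) ^ p = x ^ (p + 1) / (p + 1) := by
    intro x
    rw [intervalIntegral.integral_comp_sub_left (fun u : ℝ => u ^ p) x, sub_self, sub_zero,
      integral_rpow (Or.inl hp1), Real.zero_rpow hp1pos.ne', sub_zero]
  -- integrability of the t-sections
  have hIntT : ∀ x : ℝ, 0 < x → x < 1 →
      IntegrableOn (fun t => ((x - t) ^ p * φ' t) * (1 - x) ^ q) (Set.Ioo 0 x) volume := by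
    intro x hx0 hx1
    have i2 := (hker x).mul_continuousOn
      (hφ'.mono (by rw [Set.uIcc_of_le hx0.le]; exact Set.Icc_subset_Icc le_rfl hx1.le))
    have i3 := i2.mul_const ((1 - x) ^ q)
    exact (intervalIntegrable_iff_integrableOn_Ioo_of_le hx0.le).mp i3
  have hFintT : ∀ x : ℝ, Integrable (fun t => F (x, t)) volume := by
    intro x
    by_cases hx : 0 < x ∧ x < 1
    · rw [hsec x hx.2]
      exact (integrable_indicator_iff measurableSet_Ioo).mpr (hIntT x hx.1 hx.2)
    · rw [hzero x hx]; exact integrable_zero _ _ _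
  -- bound on the norm integrals
  have hnormbd : ∀ x : ℝ, 0 < x → x < 1 →
      (∫ t, ‖F (x, t)‖) ≤ M / (p + 1) * (1 - x) ^ q := by
    intro x hx0 hx1
    have h1x : (0:ℝ) < 1 - x := by linarith
    have e1 : (fun t => ‖F (x, t)‖) =
        (Set.Ioo (0:ℝ) x).indicator
          (fun t => ‖((x - t) ^ p * φ' t) * (1 - x) ^ q‖) := by
      funext t
      rw [show F (x, t) = ((Set.Ioo (0:ℝ) x).indicator
          (fun t => ((x - t) ^ p * φ' t) * (1 - x) ^ q)) t from congrFun (hsec x hx1) t,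
        norm_indicator_eq_indicator_norm]
    rw [e1, MeasureTheory.integral_indicator measurableSet_Ioo]
    have hbd : ∀ t ∈ Set.Ioo (0:ℝ) x,
        ‖((x - t) ^ p * φ' t) * (1 - x) ^ q‖ ≤ (x - t) ^ p * (M * (1 - x) ^ q) := by
      intro t ht
      have hxt : (0:ℝ) < x - t := by linarith [ht.2]
      have h2 : ‖((x - t) ^ p * φ' t) * (1 - x) ^ q‖
          = (x - t) ^ p * ‖φ' t‖ * (1 - x) ^ q := by
        rw [norm_mul, norm_mul, Real.norm_of_nonneg (Real.rpow_nonneg hxt.le p),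
          Real.norm_of_nonneg (Real.rpow_nonneg h1x.le q)]
      rw [h2]
      have hMt : ‖φ' t‖ ≤ M := hM t ⟨ht.1.le, le_trans ht.2.le hx1.le⟩
      have := mul_le_mul_of_nonneg_left hMt (Real.rpow_nonneg hxt.le p)
      calc (x - t) ^ p * ‖φ' t‖ * (1 - x) ^ q
          ≤ (x - t) ^ p * M * (1 - x) ^ q :=
            mul_le_mul_of_nonneg_right this (Real.rpow_nonneg h1x.le q)
        _ = (x - t) ^ p * (M * (1 - x) ^ q) := by ring
    have hintR : IntegrableOn (fun t => (x - t) ^ p * (M * (1 - x) ^ q))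
        (Set.Ioo 0 x) volume :=
      (intervalIntegrable_iff_integrableOn_Ioo_of_le hx0.le).mp
        ((hker x).mul_const _)
    have := setIntegral_mono_on ((hIntT x hx0 hx1).norm) hintR measurableSet_Ioo hbd
    refine le_trans this ?_
    rw [← integral_Ioc_eq_integral_Ioo, ← intervalIntegral.integral_of_le hx0.le,
      intervalIntegral.integral_mul_const, hkerval x]
    have hx1' : x ^ (p + 1) ≤ 1 := Real.rpow_le_one hx0.le hx1.le hp1pos.le
    have : x ^ (p + 1) / (p + 1) ≤ 1 / (p + 1) := by
      gcongr
    calc x ^ (p + 1) / (p + 1) * (M * (1 - x) ^ q)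
        ≤ 1 / (p + 1) * (M * (1 - x) ^ q) := by
          apply mul_le_mul_of_nonneg_right this
          exact mul_nonneg hM0 (Real.rpow_nonneg h1x.le q)
      _ = M / (p + 1) * (1 - x) ^ q := by ring
  -- integrability of x ↦ ∫ t, ‖F (x,t)‖
  have hBint : Integrable ((Set.Ioo (0:ℝ) 1).indicator
      (fun x => M / (p + 1) * (1 - x) ^ q)) volume := by
    refine (integrable_indicator_iff measurableSet_Ioo).mpr ?_
    have i1 : IntervalIntegrable (fun u : ℝ => u ^ q) volume 0 1 :=
      intervalIntegral.intervalIntegrable_rpow' hq1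
    have i2 : IntervalIntegrable (fun x : ℝ => (1 - x) ^ q) volume 0 1 := by
      simpa using (i1.comp_sub_left 1).symm
    exact (intervalIntegrable_iff_integrableOn_Ioo_of_le zero_le_one).mp
      (i2.const_mul _)
  have hnormint : Integrable (fun x => ∫ t, ‖F (x, t)‖) volume := by
    refine hBint.mono' hFmeas.norm.integral_prod_right' ?_
    refine Filter.Eventually.of_forall (fun x => ?_)
    by_cases hx : 0 < x ∧ x < 1
    · rw [Real.norm_of_nonneg (integral_nonneg (fun t => norm_nonneg _)),
        Set.indicator_of_mem (Set.mem_Ioo.mpr hx)]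
      exact hnormbd x hx.1 hx.2
    · have hFz : ∀ t, F (x, t) = 0 := fun t => congrFun (hzero x hx) t
      simp only [hFz, MeasureTheory.integral_zero, norm_zero]
      refine Set.indicator_nonneg (fun y hy => ?_) x
      exact mul_nonneg (div_nonneg hM0 hp1pos.le)
        (Real.rpow_nonneg (by linarith [hy.2] : (0:ℝ) ≤ 1 - y) q)
  have hFint : Integrable F (volume.prod volume) :=
    (integrable_prod_iff hFmeas).mpr
      ⟨Filter.Eventually.of_forall hFintT, hnormint⟩
  -- Fubini swap
  have hswap : (∫ x, ∫ t, F (x, t)) = ∫ t, ∫ x, F (x, t) :=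
    integral_integral_swap (f := fun x t => F (x, t)) hFint
  -- value of x-sections
  set C : ℝ := ∫ u in (0:ℝ)..1, u ^ p * (1 - u) ^ q with hCdef
  have hsecint : ∀ t : ℝ, (∫ x, F (x, t)) =
      (Set.Ioo (0:ℝ) 1).indicator (fun t => C * φ' t) t := by
    intro t
    by_cases ht : 0 < t ∧ t < 1
    · rw [Set.indicator_of_mem (Set.mem_Ioo.mpr ht)]
      rw [hsec2 t ht.1, MeasureTheory.integral_indicator measurableSet_Ioo,
        ← integral_Ioc_eq_integral_Ioo, ← intervalIntegral.integral_of_le ht.2.le]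
      have e : ∀ x : ℝ, ((x - t) ^ p * φ' t) * (1 - x) ^ q
          = φ' t * ((x - t) ^ p * (1 - x) ^ q) := fun x => by ring
      simp_rw [e]
      rw [intervalIntegral.integral_const_mul, rl_subst p q hpq t ht.1.le ht.2, ← hCdef,
        mul_comm]
    · rw [Set.indicator_of_notMem (by simpa [Set.mem_Ioo] using ht)]
      have hFz : ∀ x, F (x, t) = 0 := fun x => congrFun (htzero t ht) x
      simp only [hFz, MeasureTheory.integral_zero]
  -- reduce the goal
  simp only [mul_assoc]
  rw [intervalIntegral.integral_const_mul]
  have hmain : (∫ x in (0:ℝ)..1,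
      (∫ t in (0:ℝ)..x, (x - t) ^ p * φ' t) * (1 - x) ^ q) = 0 := by
    have hre : EqOn (fun x => (∫ t in (0:ℝ)..x, (x - t) ^ p * φ' t) * (1 - x) ^ q)
        (fun x => ∫ t, F (x, t)) (Set.Ioo (0:ℝ) 1) := by
      intro x hx
      dsimp only
      rw [hsec x hx.2, MeasureTheory.integral_indicator measurableSet_Ioo,
        ← integral_Ioc_eq_integral_Ioo, ← intervalIntegral.integral_of_le hx.1.le,
        intervalIntegral.integral_mul_const]
    rw [intervalIntegral.integral_of_le zero_le_one, integral_Ioc_eq_integral_Ioo,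
      setIntegral_congr_fun measurableSet_Ioo hre,
      setIntegral_eq_integral_of_forall_compl_eq_zero (fun x hx => by
        have hFz : ∀ t, F (x, t) = 0 :=
          fun t => congrFun (hzero x (by simpa [Set.mem_Ioo] using hx)) t
        simp only [hFz, MeasureTheory.integral_zero]),
      hswap]
    have : (fun t => ∫ x, F (x, t)) =
        (Set.Ioo (0:ℝ) 1).indicator (fun t => C * φ' t) := funext hsecint
    rw [this, MeasureTheory.integral_indicator measurableSet_Ioo,
      MeasureTheory.integral_const_mul, ← integral_Ioc_eq_integral_Ioo,
      ← intervalIntegral.integral_of_le zero_le_one]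
    have hftc : (∫ t in (0:ℝ)..1, φ' t) = φ 1 - φ 0 :=
      intervalIntegral.integral_eq_sub_of_hasDerivAt
        (fun x hx => hφ x (by rwa [Set.uIcc_of_le zero_le_one] at hx))
        (ContinuousOn.intervalIntegrable
          (by rw [Set.uIcc_of_le zero_le_one]; exact hφ'))
    rw [hftc, h0, h1, sub_zero, mul_zero]
  rw [hmain, mul_zero]
end

section
/- Let V be a real normed vector space, V_h a linear subspace of V, A : V × V → ℝ a bilinear map, and c₀ > 0 with A(v, v) ≥ c₀ ‖v‖² for all v ∈ V. Let G assign to each u ∈ V a linear functional G(u) : V → ℝ satisfying the Lipschitz-type bound |(G(u) − G(w))(v)| ≤ l_M ‖u − w‖ ‖v‖ for all u, w, v ∈ V, where 0 ≤ l_M < c₀. Let F : V → ℝ, and suppose: u ∈ V satisfies A(u, v) + G(u)(v) = F(v) for all v ∈ V_h; u_h ∈ V_h satisfies A(u_h, v) + G(u_h)(v) = F(v) for all v ∈ V_h; and p ∈ V_h satisfies the Galerkin orthogonality A(u − p, v) = 0 for all v ∈ V_h. Then ‖p − u_h‖ ≤ (l_M/(c₀ − l_M)) ‖u − p‖, and consequently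 ‖u − u_h‖ ≤ (c₀/(c₀ − l_M)) ‖u − p‖. (This is the generalized Céa-type estimate underlying the a priori error bound for the Galerkin finite element method applied to the nonlinear fractional problem.) -/
/-- Generalized Céa-type a priori estimate for the Galerkin method applied to the
nonlinear fractional problem: with `A` coercive with constant `c₀`, `G` Lipschitz
with constant `l_M < c₀`, `u` the weak solution, `u_h` the discrete solution, and
`p ∈ V_h` the Ritz projection of `u` (`A(u - p, v) = 0` for `v ∈ V_h`), one has
`‖p - u_h‖ ≤ (l_M/(c₀ - l_M)) ‖u - p‖` and `‖u - u_h‖ ≤ (c₀/(c₀ - l_M)) ‖u - p‖`. -/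
theorem galerkin_cea_estimate {V : Type*} [NormedAddCommGroup V] [NormedSpace ℝ V]
    (Vh : Submodule ℝ V) (A : V →ₗ[ℝ] V →ₗ[ℝ] ℝ) (c₀ lM : ℝ)
    (hc₀ : 0 < c₀) (hlM0 : 0 ≤ lM) (hlM : lM < c₀)
    (hcoer : ∀ v : V, c₀ * ‖v‖ ^ 2 ≤ A v v)
    (G : V → (V →ₗ[ℝ] ℝ))
    (hG : ∀ u w v : V, |(G u - G w) v| ≤ lM * ‖u - w‖ * ‖v‖)
    (F : V → ℝ) (u uh p : V) (huh : uh ∈ Vh) (hp : p ∈ Vh)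
    (hu : ∀ v ∈ Vh, A u v + G u v = F v)
    (huh' : ∀ v ∈ Vh, A uh v + G uh v = F v)
    (hritz : ∀ v ∈ Vh, A (u - p) v = 0) :
    ‖p - uh‖ ≤ (lM / (c₀ - lM)) * ‖u - p‖ ∧
      ‖u - uh‖ ≤ (c₀ / (c₀ - lM)) * ‖u - p‖ := by
  set e := p - uh with he
  have heVh : e ∈ Vh := Vh.sub_mem hp huh
  have hsub : c₀ - lM > 0 := by linarith
  -- key identity: A e e = -(G u - G uh) e
  have key : A e e = -((G u - G uh) e) := by
    have h1 : A u e + G u e = F e := hu e heVh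
    have h2 : A uh e + G uh e = F e := huh' e heVh
    have h3 : A (u - p) e = 0 := hritz e heVh
    simp only [he, map_sub, LinearMap.sub_apply] at *
    linarith
  have hbound : c₀ * ‖e‖ ^ 2 ≤ lM * ‖u - uh‖ * ‖e‖ := by
    calc c₀ * ‖e‖ ^ 2 ≤ A e e := hcoer e
    _ = -((G u - G uh) e) := key
    _ ≤ |(G u - G uh) e| := neg_le_abs _
    _ ≤ lM * ‖u - uh‖ * ‖e‖ := hG u uh e
  have huu : ‖u - uh‖ ≤ ‖u - p‖ + ‖e‖ := by
    have : u - uh = (u - p) + e := by rw [he]; abel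
    rw [this]; exact norm_add_le _ _
  have hestep : (c₀ - lM) * ‖e‖ ≤ lM * ‖u - p‖ := by
    rcases eq_or_lt_of_le (norm_nonneg e) with h0 | h0
    · rw [← h0, mul_zero]; positivity
    · have : c₀ * ‖e‖ ^ 2 ≤ lM * (‖u - p‖ + ‖e‖) * ‖e‖ := by
        refine hbound.trans ?_
        have := mul_le_mul_of_nonneg_right (mul_le_mul_of_nonneg_left huu hlM0) (norm_nonneg e)
        linarith
      nlinarith
  have h1 : ‖e‖ ≤ (lM / (c₀ - lM)) * ‖u - p‖ := by
    rw [div_mul_eq_mul_div, le_div_iff₀ hsub]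
    linarith
  refine ⟨h1, ?_⟩
  have : c₀ / (c₀ - lM) = 1 + lM / (c₀ - lM) := by field_simp; ring
  rw [this]
  calc ‖u - uh‖ ≤ ‖u - p‖ + ‖e‖ := huu
  _ ≤ ‖u - p‖ + (lM / (c₀ - lM)) * ‖u - p‖ := by linarith
  _ = (1 + lM / (c₀ - lM)) * ‖u - p‖ := by ring
end

section
/- Let 1 < s < 2 and let h : [0,1] → ℝ be continuous. Set c = (1/Γ(s)) ∫₀¹ (1−t)^{s−1} h(t) dt and define u : (0,1] → ℝ by u(x) = c x^{s−1} − (1/Γ(s)) ∫₀ˣ (x−t)^{s−1} h(t) dt. Then u(1) = 0, u(x) → 0 as x → 0⁺, and for every x ∈ (0,1) the function x ↦ (1/Γ(2−s)) ∫₀ˣ (x−t)^{1−s} u(t) dt is twice differentiable at x with second derivative equal to −h(x); that is, the Riemann–Liouville derivative of order s of u satisfies (₀ᴿDₓˢ u)(x) = −h(x) on (0,1). (With h = g(·,u(·)) − f, this is the solution representation u(x) = x^{s−1} (₀Iₓˢ(g(·,u)−f))(1) − (₀Iₓˢ(g(·,u)−f))(x) for the Riemann–Liouville two-point boundary value problem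 −₀ᴿDₓˢ u + g(x,u) = f, u(0) = u(1) = 0.) -/
open MeasureTheory intervalIntegral Set

lemma real_beta {a b : ℝ} (ha : 0 < a) (hb : 0 < b) :
    ∫ x in (0:ℝ)..1, x ^ (a - 1) * (1 - x) ^ (b - 1) =
      Real.Gamma a * Real.Gamma b / Real.Gamma (a + b) := by
  have hab : Real.Gamma (a + b) ≠ 0 := (Real.Gamma_pos_of_pos (by linarith)).ne'
  have key := Complex.Gamma_mul_Gamma_eq_betaIntegral
    (s := (a:ℂ)) (t := (b:ℂ)) (by simpa using ha) (by simpa using hb)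
  have hcoe : Complex.betaIntegral (a:ℂ) (b:ℂ)
      = ((∫ x in (0:ℝ)..1, x ^ (a - 1) * (1 - x) ^ (b - 1) : ℝ) : ℂ) := by
    rw [Complex.betaIntegral, ← intervalIntegral.integral_ofReal]
    refine intervalIntegral.integral_congr fun x hx => ?_
    rw [Set.uIcc_of_le (by norm_num : (0:ℝ) ≤ 1)] at hx
    rw [show ((a:ℂ)-1) = ((a-1:ℝ):ℂ) by push_cast; ring,
      show ((b:ℂ)-1) = ((b-1:ℝ):ℂ) by push_cast; ring,
      show (1 - (x:ℂ)) = ((1-x:ℝ):ℂ) by push_cast; ring,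
      ← Complex.ofReal_cpow hx.1, ← Complex.ofReal_cpow (by linarith [hx.2]),
      ← Complex.ofReal_mul]
  rw [hcoe, ← Complex.ofReal_add, Complex.Gamma_ofReal, Complex.Gamma_ofReal,
    Complex.Gamma_ofReal, ← Complex.ofReal_mul, ← Complex.ofReal_mul] at key
  have := Complex.ofReal_inj.mp key
  field_simp
  linarith [this]

lemma beta_shift {a b r z : ℝ} (ha : 0 < a) (hb : 0 < b) (hrz : r < z) :
    ∫ t in r..z, (t - r) ^ (a - 1) * (z - t) ^ (b - 1) =
      (z - r) ^ (a + b - 1) * (Real.Gamma a * Real.Gamma b / Real.Gamma (a + b)) := by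
  set c := z - r with hc
  have hc0 : 0 < c := by simp [hc]; linarith
  have step1 : ∫ t in r..z, (t - r) ^ (a - 1) * (z - t) ^ (b - 1)
      = ∫ t in (0:ℝ)..c, t ^ (a - 1) * (c - t) ^ (b - 1) := by
    have := intervalIntegral.integral_comp_sub_right
      (fun t => t ^ (a - 1) * (c - t) ^ (b - 1)) r (a := r) (b := z)
    simp only [sub_self] at this
    rw [← this]
    refine intervalIntegral.integral_congr fun x hx => ?_
    have : c - (x - r) = z - x := by rw [hc]; ring
    rw [this]
  have step2 : ∫ t in (0:ℝ)..c, t ^ (a - 1) * (c - t) ^ (b - 1)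
      = c * ∫ x in (0:ℝ)..1, (c * x) ^ (a - 1) * (c - c * x) ^ (b - 1) := by
    rw [intervalIntegral.integral_comp_mul_left
      (fun t => t ^ (a - 1) * (c - t) ^ (b - 1)) hc0.ne' (a := 0) (b := 1)]
    simp only [mul_zero, mul_one, smul_eq_mul]
    rw [← mul_assoc, mul_inv_cancel₀ hc0.ne', one_mul]
  have step3 : ∫ x in (0:ℝ)..1, (c * x) ^ (a - 1) * (c - c * x) ^ (b - 1)
      = c ^ (a - 1) * c ^ (b - 1) * ∫ x in (0:ℝ)..1, x ^ (a - 1) * (1 - x) ^ (b - 1) := by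
    rw [← intervalIntegral.integral_const_mul]
    refine intervalIntegral.integral_congr fun x hx => ?_
    rw [Set.uIcc_of_le (by norm_num : (0:ℝ) ≤ 1)] at hx
    rw [show c - c * x = c * (1 - x) by ring,
      Real.mul_rpow hc0.le hx.1, Real.mul_rpow hc0.le (by linarith [hx.2])]
    ring
  rw [step1, step2, step3, real_beta ha hb]
  have : c * (c ^ (a - 1) * c ^ (b - 1)) = c ^ (a + b - 1) := by
    rw [← Real.rpow_add hc0, show a - 1 + (b - 1) = a + b - 2 by ring,
      show a + b - 1 = 1 + (a + b - 2) by ring, Real.rpow_add hc0, Real.rpow_one]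
  rw [← mul_assoc, this]


lemma meas_rpow_aux (c : ℝ) : Measurable fun x : ℝ => x ^ c := by fun_prop

section
variable {s z M : ℝ} {H : ℝ → ℝ}

lemma cont_rpow_aux {f : ℝ → ℝ} (hf : Continuous f) {p : ℝ} (hp : 0 ≤ p) :
    Continuous fun x => (f x) ^ p :=
  (Real.continuous_rpow_const hp).comp hf

lemma rpow_integrable (hs1 : 1 < s) (hs2 : s < 2) (hz : 0 < z) :
    IntegrableOn (fun t => (z - t) ^ (1 - s)) (Set.Ioc 0 z) := by
  rw [← intervalIntegrable_iff_integrableOn_Ioc_of_le hz.le]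
  have h0 : IntervalIntegrable (fun x : ℝ => x ^ (1 - s)) volume 0 z :=
    intervalIntegrable_rpow' (by linarith)
  simpa using (h0.comp_sub_left z).symm

lemma beta_s (hs1 : 1 < s) (hs2 : s < 2) {r z : ℝ} (hrz : r < z) :
    ∫ t in r..z, (t - r) ^ (s - 1) * (z - t) ^ (1 - s) =
      (z - r) * (Real.Gamma s * Real.Gamma (2 - s)) := by
  have h := beta_shift (a := s) (b := 2 - s) (by linarith) (by linarith) hrz
  simp only [show (2:ℝ) - s - 1 = 1 - s by ring, show s + (2 - s) - 1 = 1 by ring,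
    show s + (2 - s) = 2 by ring, show (2:ℝ) - 1 = 1 by norm_num, Real.Gamma_two, Real.rpow_one, div_one] at h
  exact h

lemma fubini_key (hs1 : 1 < s) (hs2 : s < 2) (HC : Continuous H)
    (hM : ∀ t ∈ Set.Icc (0:ℝ) 1, |H t| ≤ M) (hM0 : 0 ≤ M)
    (hz : 0 < z) (hz1 : z ≤ 1) :
    IntegrableOn (fun t => (z - t) ^ (1 - s) * ∫ r in (0:ℝ)..t, (t - r) ^ (s - 1) * H r)
      (Set.Ioc 0 z) ∧
    (∫ t in (0:ℝ)..z, (z - t) ^ (1 - s) * ∫ r in (0:ℝ)..t, (t - r) ^ (s - 1) * H r)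
      = Real.Gamma s * Real.Gamma (2 - s) * ∫ r in (0:ℝ)..z, (z - r) * H r := by
  set A : Set (ℝ × ℝ) := {p | 0 < p.1 ∧ p.1 ≤ z ∧ 0 < p.2 ∧ p.2 ≤ p.1} with hA
  set K : ℝ × ℝ → ℝ := fun p => (z - p.1) ^ (1 - s) * ((p.1 - p.2) ^ (s - 1) * H p.2) with hKdef
  set Φ : ℝ × ℝ → ℝ := A.indicator K with hΦdef
  have hAm : MeasurableSet A := by
    apply MeasurableSet.inter (measurableSet_lt measurable_const measurable_fst)
    apply MeasurableSet.inter (measurableSet_le measurable_fst measurable_const)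
    exact MeasurableSet.inter (measurableSet_lt measurable_const measurable_snd)
      (measurableSet_le measurable_snd measurable_fst)
  have hKm : Measurable K := by
    apply Measurable.mul
    · exact (meas_rpow_aux _).comp (measurable_const.sub measurable_fst)
    · exact ((meas_rpow_aux _).comp (measurable_fst.sub measurable_snd)).mul
        (HC.measurable.comp measurable_snd)
  have hΦm : Measurable Φ := hKm.indicator hAm
  -- slice descriptions
  have hslice : ∀ t ∈ Set.Ioc (0:ℝ) z,
      (fun r => Φ (t, r)) = (Set.Ioc 0 t).indicator (fun r => K (t, r)) := by
    intro t ht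
    funext r
    by_cases hr : r ∈ Set.Ioc (0:ℝ) t
    · rw [Set.indicator_of_mem hr, hΦdef,
        Set.indicator_of_mem (by exact ⟨ht.1, ht.2, hr.1, hr.2⟩)]
    · rw [Set.indicator_of_notMem hr, hΦdef, Set.indicator_of_notMem]
      intro hmem
      exact hr ⟨hmem.2.2.1, hmem.2.2.2⟩
  have hslice0 : ∀ t, t ∉ Set.Ioc (0:ℝ) z → ∀ r, Φ (t, r) = 0 := by
    intro t ht r
    rw [hΦdef, Set.indicator_of_notMem]
    intro hmem
    exact ht ⟨hmem.1, hmem.2.1⟩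
  have hrslice : ∀ r ∈ Set.Ioc (0:ℝ) z,
      (fun t => Φ (t, r)) = (Set.Icc r z).indicator (fun t => K (t, r)) := by
    intro r hr
    funext t
    by_cases ht : t ∈ Set.Icc r z
    · rw [Set.indicator_of_mem ht, hΦdef,
        Set.indicator_of_mem (by exact ⟨lt_of_lt_of_le hr.1 ht.1, ht.2, hr.1, ht.1⟩)]
    · rw [Set.indicator_of_notMem ht, hΦdef, Set.indicator_of_notMem]
      intro hmem
      exact ht ⟨hmem.2.2.2, hmem.2.1⟩
  have hrslice0 : ∀ r, r ∉ Set.Ioc (0:ℝ) z → ∀ t, Φ (t, r) = 0 := by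
    intro r hr t
    rw [hΦdef, Set.indicator_of_notMem]
    intro hmem
    exact hr ⟨hmem.2.2.1, le_trans hmem.2.2.2 hmem.2.1⟩
  -- bound on K on A
  have hKbound : ∀ t r : ℝ, (t, r) ∈ A → ‖K (t, r)‖ ≤ (z - t) ^ (1 - s) * M := by
    intro t r hmem
    obtain ⟨ht0, htz, hr0, hrt⟩ := hmem
    have h1 : (0:ℝ) ≤ (z - t) ^ (1 - s) := Real.rpow_nonneg (by linarith) _
    have h2 : (t - r) ^ (s - 1) ≤ 1 :=
      Real.rpow_le_one (by linarith) (by linarith) (by linarith)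
    have h3 : |H r| ≤ M := hM r ⟨hr0.le, by linarith⟩
    calc ‖K (t, r)‖ = (z - t) ^ (1 - s) * ((t - r) ^ (s - 1) * |H r|) := by
          rw [hKdef]
          simp only [Real.norm_eq_abs, abs_mul]
          rw [abs_of_nonneg h1, abs_of_nonneg (Real.rpow_nonneg (by linarith) _)]
      _ ≤ (z - t) ^ (1 - s) * (1 * M) := by
          apply mul_le_mul_of_nonneg_left _ h1
          exact mul_le_mul h2 h3 (abs_nonneg _) zero_le_one
      _ = (z - t) ^ (1 - s) * M := by ring
  -- integrability of Φ
  have hΦint : Integrable Φ (volume.prod volume) := by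
    rw [integrable_prod_iff hΦm.aestronglyMeasurable]
    constructor
    · refine Filter.Eventually.of_forall fun t => ?_
      by_cases ht : t ∈ Set.Ioc (0:ℝ) z
      · rw [hslice t ht]
        rw [integrable_indicator_iff measurableSet_Ioc]
        simp only [hKdef]
        have hcont : Continuous fun r : ℝ => (z - t) ^ (1 - s) * ((t - r) ^ (s - 1) * H r) :=
          continuous_const.mul ((cont_rpow_aux (continuous_const.sub continuous_id)
            (by linarith : (0:ℝ) ≤ s - 1)).mul HC)
        exact ((hcont.continuousOn.integrableOn_compact (isCompact_Icc (a := (0:ℝ)) (b := t))).mono_set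
          Set.Ioc_subset_Icc_self)
      · have : (fun r => Φ (t, r)) = 0 := funext fun r => hslice0 t ht r
        rw [this]
        exact integrable_zero _ _ _
    · have hg : Integrable ((Set.Ioc (0:ℝ) z).indicator
          (fun t => (z - t) ^ (1 - s) * (M * z))) volume := by
        rw [integrable_indicator_iff measurableSet_Ioc]
        exact (rpow_integrable hs1 hs2 hz).mul_const _
      apply hg.mono' (hΦm.norm.aestronglyMeasurable.integral_prod_right')
      refine Filter.Eventually.of_forall fun t => ?_
      by_cases ht : t ∈ Set.Ioc (0:ℝ) z
      · have h1 : (0:ℝ) ≤ (z - t) ^ (1 - s) := Real.rpow_nonneg (by linarith [ht.2]) _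
        rw [Set.indicator_of_mem ht]
        have : (fun r => ‖Φ (t, r)‖) = (Set.Ioc 0 t).indicator (fun r => ‖K (t, r)‖) := by
          funext r
          rw [congrFun (hslice t ht) r, norm_indicator_eq_indicator_norm]
        rw [Real.norm_eq_abs, abs_of_nonneg (integral_nonneg fun r => norm_nonneg _), this,
          MeasureTheory.integral_indicator measurableSet_Ioc]
        calc ∫ r in Set.Ioc 0 t, ‖K (t, r)‖
            ≤ ((z - t) ^ (1 - s) * M) * (volume (Set.Ioc 0 t)).toReal := by
              have hle := norm_setIntegral_le_of_norm_le_const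
                (μ := volume) (s := Set.Ioc (0:ℝ) t) (f := fun r => ‖K (t, r)‖)
                (C := (z - t) ^ (1 - s) * M) measure_Ioc_lt_top
                (fun r hr => by
                  rw [Real.norm_eq_abs, abs_of_nonneg (norm_nonneg _)]
                  exact hKbound t r ⟨ht.1, ht.2, hr.1, hr.2⟩)
              exact le_trans (le_abs_self _) hle
          _ ≤ (z - t) ^ (1 - s) * (M * z) := by
              rw [Real.volume_Ioc]
              rw [ENNReal.toReal_ofReal (by linarith [ht.1] : (0:ℝ) ≤ t - 0)]
              rw [mul_assoc]
              apply mul_le_mul_of_nonneg_left _ h1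
              apply mul_le_mul_of_nonneg_left _ hM0
              linarith [ht.2]
      · have : (fun r => Φ (t, r)) = 0 := funext fun r => hslice0 t ht r
        rw [Set.indicator_of_notMem ht]
        have h0 : ∀ y, Φ (t, y) = 0 := hslice0 t ht
        simp [h0]
  have hFt : ∀ t ∈ Set.Ioc (0:ℝ) z, (∫ r, Φ (t, r))
      = (z - t) ^ (1 - s) * ∫ r in (0:ℝ)..t, (t - r) ^ (s - 1) * H r := by
    intro t ht
    rw [hslice t ht, MeasureTheory.integral_indicator measurableSet_Ioc,
      intervalIntegral.integral_of_le ht.1.le, ← MeasureTheory.integral_const_mul]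
  have hint : IntegrableOn
      (fun t => (z - t) ^ (1 - s) * ∫ r in (0:ℝ)..t, (t - r) ^ (s - 1) * H r)
      (Set.Ioc 0 z) := by
    have h1 : Integrable (fun t => ∫ r, Φ (t, r)) volume := hΦint.integral_prod_left
    exact (h1.integrableOn).congr_fun hFt measurableSet_Ioc
  have hswap : (∫ t, (∫ r, Φ (t, r))) = ∫ r, (∫ t, Φ (t, r)) :=
    integral_integral_swap (f := fun t r => Φ (t, r)) hΦint
  have key1 : (∫ t in (0:ℝ)..z, (z - t) ^ (1 - s) * ∫ r in (0:ℝ)..t, (t - r) ^ (s - 1) * H r)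
      = ∫ t, (∫ r, Φ (t, r)) := by
    rw [intervalIntegral.integral_of_le hz.le]
    calc ∫ t in Set.Ioc 0 z, (z - t) ^ (1 - s) * ∫ r in (0:ℝ)..t, (t - r) ^ (s - 1) * H r
        = ∫ t in Set.Ioc 0 z, (∫ r, Φ (t, r)) :=
          setIntegral_congr_fun measurableSet_Ioc fun t ht => (hFt t ht).symm
      _ = ∫ t, (∫ r, Φ (t, r)) :=
          setIntegral_eq_integral_of_forall_compl_eq_zero fun t ht => by simp [hslice0 t ht]
  have hFr : ∀ r, (∫ t, Φ (t, r)) = (Set.Ioc (0:ℝ) z).indicator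
      (fun r => (Real.Gamma s * Real.Gamma (2 - s)) * ((z - r) * H r)) r := by
    intro r
    by_cases hr : r ∈ Set.Ioc (0:ℝ) z
    · rw [Set.indicator_of_mem hr, hrslice r hr, MeasureTheory.integral_indicator measurableSet_Icc,
        MeasureTheory.integral_Icc_eq_integral_Ioc, ← intervalIntegral.integral_of_le hr.2]
      rcases eq_or_lt_of_le hr.2 with heq | hlt
      · rw [heq, intervalIntegral.integral_same]
        simp
      · have hb := beta_s hs1 hs2 hlt
        calc ∫ t in r..z, K (t, r)
            = ∫ t in r..z, ((t - r) ^ (s - 1) * (z - t) ^ (1 - s)) * H r :=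
              intervalIntegral.integral_congr fun t _ => by simp only [hKdef]; ring
          _ = (∫ t in r..z, (t - r) ^ (s - 1) * (z - t) ^ (1 - s)) * H r :=
              intervalIntegral.integral_mul_const _ _
          _ = (Real.Gamma s * Real.Gamma (2 - s)) * ((z - r) * H r) := by rw [hb]; ring
    · rw [Set.indicator_of_notMem hr]
      simp [hrslice0 r hr]
  have key2 : (∫ r, (∫ t, Φ (t, r)))
      = Real.Gamma s * Real.Gamma (2 - s) * ∫ r in (0:ℝ)..z, (z - r) * H r := by
    calc (∫ r, (∫ t, Φ (t, r)))
        = ∫ r, (Set.Ioc (0:ℝ) z).indicator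
            (fun r => (Real.Gamma s * Real.Gamma (2 - s)) * ((z - r) * H r)) r :=
          integral_congr_ae (Filter.Eventually.of_forall hFr)
      _ = ∫ r in Set.Ioc (0:ℝ) z, (Real.Gamma s * Real.Gamma (2 - s)) * ((z - r) * H r) :=
          MeasureTheory.integral_indicator measurableSet_Ioc
      _ = (Real.Gamma s * Real.Gamma (2 - s)) * ∫ r in Set.Ioc (0:ℝ) z, (z - r) * H r :=
          MeasureTheory.integral_const_mul _ _
      _ = Real.Gamma s * Real.Gamma (2 - s) * ∫ r in (0:ℝ)..z, (z - r) * H r := by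
          rw [intervalIntegral.integral_of_le hz.le]
  exact ⟨hint, key1.trans (hswap.trans key2)⟩

end

/-- Solution representation for the Riemann–Liouville two-point boundary value problem:
for `1 < s < 2`, `h` continuous on `[0,1]`, `c = (1/Γ(s)) ∫₀¹ (1-t)^{s-1} h t dt` and
`u x = c x^{s-1} - (1/Γ(s)) ∫₀ˣ (x-t)^{s-1} h t dt`, one has `u 1 = 0`, `u x → 0` as
`x → 0⁺`, and the function `x ↦ (1/Γ(2-s)) ∫₀ˣ (x-t)^{1-s} u t dt` is twice
differentiable on `(0,1)` with second derivative `-h`; i.e. `(₀ᴿDₓˢ u)(x) = -h x`. -/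
theorem rl_bvp_solution_representation (s : ℝ) (hs1 : 1 < s) (hs2 : s < 2)
    (h : ℝ → ℝ) (hc : ContinuousOn h (Set.Icc 0 1))
    (c : ℝ) (hcdef : c = (1 / Real.Gamma s) * ∫ t in (0:ℝ)..1, (1 - t) ^ (s - 1) * h t)
    (u : ℝ → ℝ)
    (hu : ∀ x, u x = c * x ^ (s - 1)
      - (1 / Real.Gamma s) * ∫ t in (0:ℝ)..x, (x - t) ^ (s - 1) * h t) :
    u 1 = 0 ∧
    Filter.Tendsto u (nhdsWithin 0 (Set.Ioi 0)) (nhds 0) ∧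
    ∃ I' : ℝ → ℝ,
      (∀ x ∈ Set.Ioo (0:ℝ) 1,
        HasDerivAt (fun z => (1 / Real.Gamma (2 - s)) * ∫ t in (0:ℝ)..z, (z - t) ^ (1 - s) * u t)
          (I' x) x) ∧
      (∀ x ∈ Set.Ioo (0:ℝ) 1, HasDerivAt I' (-h x) x) := by
  have hΓs : 0 < Real.Gamma s := Real.Gamma_pos_of_pos (by linarith)
  have hΓ2s : 0 < Real.Gamma (2 - s) := Real.Gamma_pos_of_pos (by linarith)
  -- continuous extension of h
  set H : ℝ → ℝ := fun t => h (min 1 (max 0 t)) with hHdef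
  have hHC : Continuous H := by
    apply hc.comp_continuous (continuous_const.min (continuous_const.max continuous_id))
    intro t
    exact ⟨le_min zero_le_one (le_max_left 0 t), min_le_left _ _⟩
  have hHeq : ∀ t ∈ Set.Icc (0:ℝ) 1, H t = h t := by
    intro t ht
    rw [hHdef]
    simp only
    rw [max_eq_right ht.1, min_eq_right ht.2]
  obtain ⟨C, hC⟩ := isCompact_Icc.exists_bound_of_continuousOn hHC.continuousOn (s := Set.Icc (0:ℝ) 1)
  set M : ℝ := max C 0 with hMdef
  have hM0 : 0 ≤ M := le_max_right _ _
  have hM : ∀ t ∈ Set.Icc (0:ℝ) 1, |H t| ≤ M := fun t ht =>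
    le_trans (by simpa using hC t ht) (le_max_left _ _)
  have hhM : ∀ t ∈ Set.Icc (0:ℝ) 1, |h t| ≤ M := fun t ht => by
    rw [← hHeq t ht]; exact hM t ht
  -- part 1
  have part1 : u 1 = 0 := by
    rw [hu 1, hcdef]
    simp [Real.one_rpow]
  -- part 2
  have part2 : Filter.Tendsto u (nhdsWithin 0 (Set.Ioi 0)) (nhds 0) := by
    apply squeeze_zero_norm' (a := fun x => |c| * x ^ (s - 1) + (M / Real.Gamma s) * x)
    · filter_upwards [Ioo_mem_nhdsGT_of_mem (by constructor <;> norm_num : (0:ℝ) ∈ Set.Ico (0:ℝ) 1)]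
        with x hx
      have hx0 : 0 < x := hx.1
      have hx1 : x < 1 := hx.2
      have hbnd : ‖∫ t in (0:ℝ)..x, (x - t) ^ (s - 1) * h t‖ ≤ M * |x - 0| := by
        apply intervalIntegral.norm_integral_le_of_norm_le_const
        intro t ht
        rw [Set.uIoc_of_le hx0.le] at ht
        have h1 : (x - t) ^ (s - 1) ≤ 1 :=
          Real.rpow_le_one (by linarith [ht.2]) (by linarith [ht.1]) (by linarith)
        have h2 : |h t| ≤ M := hhM t ⟨ht.1.le, by linarith [ht.2]⟩
        rw [Real.norm_eq_abs, abs_mul, abs_of_nonneg (Real.rpow_nonneg (by linarith [ht.2]) _)]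
        calc (x - t) ^ (s - 1) * |h t| ≤ 1 * M :=
              mul_le_mul h1 h2 (abs_nonneg _) zero_le_one
          _ = M := one_mul M
      rw [hu x]
      calc ‖c * x ^ (s - 1) - 1 / Real.Gamma s * ∫ t in (0:ℝ)..x, (x - t) ^ (s - 1) * h t‖
          ≤ ‖c * x ^ (s - 1)‖ + ‖1 / Real.Gamma s * ∫ t in (0:ℝ)..x, (x - t) ^ (s - 1) * h t‖ :=
            norm_sub_le _ _
        _ ≤ |c| * x ^ (s - 1) + (M / Real.Gamma s) * x := by
            rw [Real.norm_eq_abs, Real.norm_eq_abs, abs_mul, abs_mul,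
              abs_of_nonneg (Real.rpow_nonneg hx0.le _),
              abs_of_nonneg (by positivity : (0:ℝ) ≤ 1 / Real.Gamma s)]
            have := hbnd
            rw [Real.norm_eq_abs] at this
            have h3 : 1 / Real.Gamma s * |∫ t in (0:ℝ)..x, (x - t) ^ (s - 1) * h t|
                ≤ 1 / Real.Gamma s * (M * x) := by
              apply mul_le_mul_of_nonneg_left _ (by positivity)
              simpa [abs_of_nonneg hx0.le] using this
            have h4 : 1 / Real.Gamma s * (M * x) = M / Real.Gamma s * x := by ring
            linarith
    · have hcont : Continuous fun x : ℝ => |c| * x ^ (s - 1) + (M / Real.Gamma s) * x :=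
        (continuous_const.mul (Real.continuous_rpow_const (by linarith))).add
          (continuous_const.mul continuous_id)
      have := hcont.tendsto 0
      rw [show |c| * (0:ℝ) ^ (s - 1) + (M / Real.Gamma s) * 0 = 0 by
        rw [Real.zero_rpow (by intro hh; linarith [hh])]; ring] at this
      exact this.mono_left nhdsWithin_le_nhds
  -- express u via H on [0,1]
  have huH : ∀ t ∈ Set.Icc (0:ℝ) 1, u t
      = c * t ^ (s - 1) - (1 / Real.Gamma s) * ∫ r in (0:ℝ)..t, (t - r) ^ (s - 1) * H r := by
    intro t ht
    have e : ∫ r in (0:ℝ)..t, (t - r) ^ (s - 1) * H r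
        = ∫ r in (0:ℝ)..t, (t - r) ^ (s - 1) * h r := by
      apply intervalIntegral.integral_congr
      intro r hr
      rw [Set.uIcc_of_le ht.1] at hr
      simp only [hHeq r ⟨hr.1, le_trans hr.2 ht.2⟩]
    rw [hu t, e]
  have hG : ∀ z ∈ Set.Ioo (0:ℝ) 1,
      (1 / Real.Gamma (2 - s)) * ∫ t in (0:ℝ)..z, (z - t) ^ (1 - s) * u t
      = c * Real.Gamma s * z
        - (z * (∫ r in (0:ℝ)..z, H r) - ∫ r in (0:ℝ)..z, r * H r) := by
    intro z hz
    obtain ⟨hint, heq⟩ := fubini_key hs1 hs2 hHC hM hM0 hz.1 hz.2.le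
    have hI1 : IntervalIntegrable (fun t => (z - t) ^ (1 - s) * t ^ (s - 1)) volume 0 z := by
      rw [intervalIntegrable_iff_integrableOn_Ioc_of_le hz.1.le]
      exact (rpow_integrable hs1 hs2 hz.1).mul_continuousOn_of_subset
        ((Real.continuous_rpow_const (by linarith : (0:ℝ) ≤ s - 1)).continuousOn)
        measurableSet_Ioc (isCompact_Icc (a := (0:ℝ)) (b := z)) Set.Ioc_subset_Icc_self
    have hI2 : IntervalIntegrable
        (fun t => (z - t) ^ (1 - s) * ∫ r in (0:ℝ)..t, (t - r) ^ (s - 1) * H r) volume 0 z := by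
      rw [intervalIntegrable_iff_integrableOn_Ioc_of_le hz.1.le]
      exact hint
    have e1 : ∫ t in (0:ℝ)..z, (z - t) ^ (1 - s) * u t
        = ∫ t in (0:ℝ)..z, (c * ((z - t) ^ (1 - s) * t ^ (s - 1))
            - (1 / Real.Gamma s)
              * ((z - t) ^ (1 - s) * ∫ r in (0:ℝ)..t, (t - r) ^ (s - 1) * H r)) := by
      apply intervalIntegral.integral_congr
      intro t ht
      rw [Set.uIcc_of_le hz.1.le] at ht
      simp only [huH t ⟨ht.1, le_trans ht.2 hz.2.le⟩]
      ring
    have e2 : ∫ t in (0:ℝ)..z, (c * ((z - t) ^ (1 - s) * t ^ (s - 1))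
            - (1 / Real.Gamma s)
              * ((z - t) ^ (1 - s) * ∫ r in (0:ℝ)..t, (t - r) ^ (s - 1) * H r))
        = c * (∫ t in (0:ℝ)..z, (z - t) ^ (1 - s) * t ^ (s - 1))
          - (1 / Real.Gamma s) * ∫ t in (0:ℝ)..z,
              (z - t) ^ (1 - s) * ∫ r in (0:ℝ)..t, (t - r) ^ (s - 1) * H r := by
      rw [intervalIntegral.integral_sub (hI1.const_mul c) (hI2.const_mul _),
        intervalIntegral.integral_const_mul, intervalIntegral.integral_const_mul]
    have e3 : ∫ t in (0:ℝ)..z, (z - t) ^ (1 - s) * t ^ (s - 1)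
        = z * (Real.Gamma s * Real.Gamma (2 - s)) := by
      have hb := beta_s hs1 hs2 (r := 0) hz.1
      simp only [sub_zero] at hb
      rw [← hb]
      apply intervalIntegral.integral_congr
      intro t _
      ring
    have e4 : ∫ r in (0:ℝ)..z, (z - r) * H r
        = z * (∫ r in (0:ℝ)..z, H r) - ∫ r in (0:ℝ)..z, r * H r := by
      rw [← intervalIntegral.integral_const_mul,
        ← intervalIntegral.integral_sub (f := fun r => z * H r) (g := fun r => r * H r) ((continuous_const.mul hHC).intervalIntegrable 0 z)
          ((continuous_id'.mul hHC).intervalIntegrable 0 z)]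
      apply intervalIntegral.integral_congr
      intro r _
      ring
    rw [e1, e2, e3, heq, e4]
    field_simp
  refine ⟨part1, part2, fun y => c * Real.Gamma s - ∫ t in (0:ℝ)..y, H t, ?_, ?_⟩
  · intro x hx
    have hd1 : HasDerivAt (fun y => ∫ t in (0:ℝ)..y, H t) (H x) x :=
      (hHC.integral_hasStrictDerivAt 0 x).hasDerivAt
    have hd2 : HasDerivAt (fun y => ∫ t in (0:ℝ)..y, t * H t) (x * H x) x :=
      ((continuous_id'.mul hHC).integral_hasStrictDerivAt 0 x).hasDerivAt
    have hdG : HasDerivAt (fun z => c * Real.Gamma s * z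
        - (z * (∫ r in (0:ℝ)..z, H r) - ∫ r in (0:ℝ)..z, r * H r))
        (c * Real.Gamma s - ∫ t in (0:ℝ)..x, H t) x := by
      have h1 : HasDerivAt (fun z : ℝ => c * Real.Gamma s * z) (c * Real.Gamma s) x := by
        simpa using (hasDerivAt_id x).const_mul (c * Real.Gamma s)
      have h2 : HasDerivAt (fun z => z * (∫ r in (0:ℝ)..z, H r))
          (1 * (∫ r in (0:ℝ)..x, H r) + x * H x) x := (hasDerivAt_id x).mul hd1
      have h3 := h1.sub (h2.sub hd2)
      exact h3.congr_deriv (by ring)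
    refine hdG.congr_of_eventuallyEq ?_
    filter_upwards [isOpen_Ioo.mem_nhds hx] with z hz
    exact hG z hz
  · intro x hx
    have hd1 : HasDerivAt (fun y => ∫ t in (0:ℝ)..y, H t) (H x) x :=
      (hHC.integral_hasStrictDerivAt 0 x).hasDerivAt
    have hds := hd1.const_sub (c * Real.Gamma s)
    rw [show h x = H x from (hHeq x ⟨hx.1.le, hx.2.le⟩).symm]
    exact hds
end
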